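/- Let k be an integer with k ≤ σ − 2. If the auxiliary graph G* is (k+2)-vertex-connected and, for every monitor m ∈ M, the auxiliary graph G_m is (k+1)-vertex-connected, then G is k-identifiable under CSP. -/

import Mathlib

open SimpleGraph

/-- A measurement path in `G`: a walk together with its two endpoints. -/
abbrev MWalk {V : Type*} (G : SimpleGraph V) := Σ u : V, Σ v : V, G.Walk u v

/-- A measurement path traverses a node `x` iff `x` lies on the walk. -/
def Traverses {V : Type*} {G : SimpleGraph V} (p : MWalk G) (x : V) : Prop :=
  x ∈ p.2.2.support

/-- Two failure sets `F`, `F'` are distinguishable w.r.t. the collection `P` of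
measurement paths: some path of `P` traverses a node of one set but no node of
the other. -/
def Distinguishable {V : Type*} {G : SimpleGraph V} (P : Set (MWalk G))
    (F F' : Set V) : Prop :=
  (∃ p ∈ P, (∃ x ∈ F, Traverses p x) ∧ ∀ x ∈ F', ¬ Traverses p x) ∨
  (∃ p ∈ P, (∃ x ∈ F', Traverses p x) ∧ ∀ x ∈ F, ¬ Traverses p x)

/-- `k`-identifiability w.r.t. paths `P`, where failure sets range over subsets
of the non-monitor set `Nm`. -/
def Identifiable {V : Type*} {G : SimpleGraph V} (P : Set (MWalk G))
    (Nm : Set V) (k : ℕ) : Prop :=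
  ∀ F F' : Set V, F ⊆ Nm → F' ⊆ Nm → F.ncard ≤ k → F'.ncard ≤ k → F ≠ F' →
    Distinguishable P F F'

/-- CAP measurement paths: all walks whose two endpoints are monitors
(endpoints may coincide, nodes may be revisited). -/
def CAP {V : Type*} (G : SimpleGraph V) (M : Set V) : Set (MWalk G) :=
  { p | p.1 ∈ M ∧ p.2.1 ∈ M }

/-- CSP measurement paths: all simple (cycle-free) paths whose two endpoints
are distinct monitors. -/
def CSP {V : Type*} (G : SimpleGraph V) (M : Set V) : Set (MWalk G) :=
  { p | p.1 ∈ M ∧ p.2.1 ∈ M ∧ p.1 ≠ p.2.1 ∧ p.2.2.IsPath }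

/-- Every connected component of `G − V'` contains at least one monitor. -/
def ComponentsHaveMonitor {V : Type*} (G : SimpleGraph V) (M : Set V)
    (V' : Set V) : Prop :=
  ∀ v : ↥(V'ᶜ), ∃ m : ↥(V'ᶜ), (m : V) ∈ M ∧ (G.induce V'ᶜ).Reachable v m

/-- The auxiliary graph on the non-monitors `Nm` plus a new virtual monitor
`m'` (the vertex `none`), where the monitors in `M'` are used to create the
virtual links: edges of `G` between non-monitors are kept; `m'` is joined to
each non-monitor adjacent in `G` to some monitor in `M'`; and two non-monitors
each adjacent in `G` to some monitor in `M'` are joined.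
`G* = StarGraph G Mᶜ M` and `G_m = StarGraph G Mᶜ (M \ {m})`. -/
def StarGraph {V : Type*} (G : SimpleGraph V) (Nm M' : Set V) :
    SimpleGraph (Option ↥Nm) where
  Adj x y :=
    match x, y with
    | none, none => False
    | none, some u => ∃ m ∈ M', G.Adj (u : V) m
    | some u, none => ∃ m ∈ M', G.Adj (u : V) m
    | some u, some w => (u : V) ≠ (w : V) ∧
        (G.Adj (u : V) (w : V) ∨
          ((∃ m ∈ M', G.Adj (u : V) m) ∧ ∃ m ∈ M', G.Adj (w : V) m))
  symm := ⟨by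
    rintro (_ | u) (_ | w) h
    · exact h
    · exact h
    · exact h
    · exact ⟨fun e => h.1 e.symm, h.2.imp (fun hh => hh.symm) fun hh => ⟨hh.2, hh.1⟩⟩⟩
  loopless := ⟨by
    rintro (_ | u) h
    · exact h
    · exact h.1 rfl⟩

/-- A graph `H` is `k`-vertex-connected: it has more than `k` vertices and
removing fewer than `k` vertices leaves it connected. -/
def KConnected {W : Type*} (H : SimpleGraph W) (k : ℕ) : Prop :=
  k < Nat.card W ∧ ∀ S : Set W, S.ncard < k → (H.induce Sᶜ).Connected

/-- The vertex connectivity `δ(H)`: the largest `k` such that `H` is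
`k`-vertex-connected. -/
noncomputable def vertexConnectivity {W : Type*} (H : SimpleGraph W) : ℕ :=
  sSup { k | KConnected H k }

/-- The maximum identifiability: the largest `k ∈ {0, …, |Nm|}` such that the
network is `k`-identifiable w.r.t. `P`. -/
noncomputable def maxIdent {V : Type*} {G : SimpleGraph V} (P : Set (MWalk G))
    (Nm : Set V) : ℕ :=
  sSup { k | k ≤ Nm.ncard ∧ Identifiable P Nm k }

/-- `MSC(v)`: the minimum cardinality of a set `V' ⊆ Nm \ {v}` of non-monitors
such that every path of `P` traversing `v` traverses some node of `V'`
(`⊤ = ∞` if no such set exists). -/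
noncomputable def MSC {V : Type*} {G : SimpleGraph V} (P : Set (MWalk G))
    (Nm : Set V) (v : V) : ℕ∞ :=
  sInf { n : ℕ∞ | ∃ V' : Set V, V' ⊆ Nm \ {v} ∧
    (∀ p ∈ P, Traverses p v → ∃ x ∈ V', Traverses p x) ∧ n = (V'.ncard : ℕ∞) }

namespace StmtAux

variable {W : Type*} {H : SimpleGraph W}

lemma isPath_append_junction {a x b : W} {p : H.Walk a x} {q : H.Walk x b}
    (hp : p.IsPath) (hq : q.IsPath)
    (hj : ∀ y ∈ p.support, y ∈ q.support → y = x) : (p.append q).IsPath := by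
  rw [Walk.isPath_def, Walk.support_append, List.nodup_append]
  refine ⟨hp.support_nodup, ?_, ?_⟩
  · have := hq.support_nodup
    rw [q.support_eq_cons] at this
    exact this.of_cons
  · intro y hyp z hyt hyz
    rw [← hyz] at hyt
    have hyq : y ∈ q.support := by
      rw [q.support_eq_cons]; exact List.mem_cons_of_mem _ hyt
    have hyx := hj y hyp hyq
    subst hyx
    have := hq.support_nodup
    rw [q.support_eq_cons] at this
    exact (List.nodup_cons.mp this).1 hyt

lemma isPath_concat {a b c : W} {p : H.Walk a b} (hp : p.IsPath) (h : H.Adj b c)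
    (hc : c ∉ p.support) : (p.concat h).IsPath := by
  rw [Walk.concat_eq_append]
  refine isPath_append_junction hp ?_ ?_
  · rw [Walk.isPath_def]
    simp [h.ne]
  · intro y hyp hyq
    rw [Walk.support_cons, Walk.support_nil, List.mem_cons, List.mem_singleton] at hyq
    rcases hyq with rfl | rfl
    · rfl
    · exact absurd hyp hc

lemma end_not_mem_takeUntil [DecidableEq W] {a w b : W} {p : H.Walk a w} (hp : p.IsPath)
    (hb : b ∈ p.support) (hbw : b ≠ w) : w ∉ (p.takeUntil b hb).support := by
  intro hw
  have hspec := p.take_spec hb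
  have hnd := hp.support_nodup
  rw [← hspec, Walk.support_append, List.nodup_append] at hnd
  have hwd : w ∈ (p.dropUntil b hb).support.tail := by
    have h1 : w ∈ (p.dropUntil b hb).support := Walk.end_mem_support _
    rw [(p.dropUntil b hb).support_eq_cons, List.mem_cons] at h1
    rcases h1 with h1 | h1
    · exact absurd h1.symm hbw
    · exact h1
  exact hnd.2.2 w hw w hwd rfl

lemma exists_first_mem {S : Set W} {c v : W} (q : H.Walk c v) (hv : v ∈ S) :
    ∃ x, x ∈ S ∧ ∃ seg : H.Walk c x, (∀ y ∈ seg.support, y ∈ q.support) ∧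
      (∀ y ∈ seg.support, y ∈ S → y = x) := by
  classical
  induction q with
  | nil => exact ⟨_, hv, Walk.nil, by simp, by intro y hy _; simpa using hy⟩
  | @cons cc dd vv h q' ih =>
    by_cases hcS : cc ∈ S
    · exact ⟨cc, hcS, Walk.nil, by simp, by intro y hy _; simpa using hy⟩
    · obtain ⟨x, hx, seg, hsub, hfirst⟩ := ih hv
      refine ⟨x, hx, Walk.cons h seg, ?_, ?_⟩
      · intro y hy
        rw [Walk.support_cons, List.mem_cons] at hy
        rw [Walk.support_cons, List.mem_cons]
        rcases hy with rfl | hy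
        · exact Or.inl rfl
        · exact Or.inr (hsub y hy)
      · intro y hy hyS
        rw [Walk.support_cons, List.mem_cons] at hy
        rcases hy with rfl | hy
        · exact absurd hyS hcS
        · exact hfirst y hy hyS

lemma exists_penultimate : ∀ {a b : W} (r : H.Walk a b), r.IsPath → 1 ≤ r.length →
    ∃ (w : W) (_ : H.Adj w b) (r' : H.Walk a w), r'.IsPath ∧ r'.length + 1 = r.length ∧
      b ∉ r'.support ∧ ∀ y ∈ r'.support, y ∈ r.support := by
  intro a b r
  induction r with
  | nil => intro _ h; simp at h
  | @cons aa cc bb h r' ih =>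
    intro hp _
    by_cases hl : r'.length = 0
    · have hcb : cc = bb := Walk.eq_of_length_eq_zero hl
      subst hcb
      refine ⟨aa, h, Walk.nil, by simp, by simp [hl], ?_, by simp⟩
      simp only [Walk.support_nil, List.mem_singleton]
      exact fun hba => h.ne' hba
    · obtain ⟨w, hw, r'', hr''p, hlen, hbr'', hsub⟩ :=
        ih hp.of_cons (Nat.one_le_iff_ne_zero.mpr hl)
      have hanr : aa ∉ r'.support := ((Walk.cons_isPath_iff _ _).mp hp).2
      refine ⟨w, hw, Walk.cons h r'', ?_, ?_, ?_, ?_⟩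
      · rw [Walk.cons_isPath_iff]
        exact ⟨hr''p, fun ha => hanr (hsub aa ha)⟩
      · simp only [Walk.length_cons]; omega
      · rw [Walk.support_cons, List.mem_cons]
        intro hmem
        rcases hmem with hba | hb
        · exact hanr (hba ▸ Walk.end_mem_support r')
        · exact hbr'' hb
      · intro y hy
        rw [Walk.support_cons, List.mem_cons] at hy
        rw [Walk.support_cons, List.mem_cons]
        rcases hy with rfl | hy
        · exact Or.inl rfl
        · exact Or.inr (hsub y hy)

lemma walk_of_induce {s : Set W} {u v : ↥s} (p : (H.induce s).Walk u v) :
    ∃ q : H.Walk u.val v.val, ∀ y ∈ q.support, y ∈ s := by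
  induction p with
  | nil => exact ⟨Walk.nil, by simp⟩
  | @cons uu dd vv h p' ih =>
    obtain ⟨q, hq⟩ := ih
    have hadj : H.Adj uu.val dd.val := h
    refine ⟨Walk.cons hadj q, ?_⟩
    intro y hy
    rw [Walk.support_cons, List.mem_cons] at hy
    rcases hy with rfl | hy
    · exact uu.2
    · exact hq y hy


lemma mem_support_concat {a b c y : W} {p : H.Walk a b} (h : H.Adj b c) :
    y ∈ (p.concat h).support ↔ y ∈ p.support ∨ y = c := by
  rw [Walk.support_concat, List.mem_append, List.mem_singleton]

def TwoPaths (H : SimpleGraph W) (A : Set W) (a b : W) : Prop :=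
  ∃ p q : H.Walk a b, p.IsPath ∧ q.IsPath ∧ (∀ y ∈ p.support, y ∈ A) ∧
    (∀ y ∈ q.support, y ∈ A) ∧ ∀ y, y ∈ p.support → y ∈ q.support → y = a ∨ y = b

section Whitney
variable [DecidableEq W] {A : Set W}

lemma whitney_base
    (hconn : ∀ x ∈ A, ∀ u ∈ A, ∀ w ∈ A, u ≠ x → w ≠ x →
      ∃ p : H.Walk u w, p.IsPath ∧ ∀ y ∈ p.support, y ∈ A ∧ y ≠ x)
    {a b : W} (ha : a ∈ A) (hb : b ∈ A) (hadj : H.Adj a b)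
    (hA3 : ∃ c ∈ A, c ≠ a ∧ c ≠ b) : TwoPaths H A a b := by
  obtain ⟨c, hc, hca, hcb⟩ := hA3
  obtain ⟨pb, hpbP, hpbA⟩ := hconn a ha b hb c hc hadj.ne' hca
  cases pb with
  | nil => exact absurd rfl hcb
  | @cons _ d _ h1 pb' =>
    have hdmem : d ∈ (Walk.cons h1 pb').support := by
      rw [Walk.support_cons, List.mem_cons]; exact Or.inr pb'.start_mem_support
    have hdA : d ∈ A := (hpbA d hdmem).1
    have hda : d ≠ a := (hpbA d hdmem).2
    have hdb : d ≠ b := by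
      intro hdb
      exact ((Walk.cons_isPath_iff _ _).mp hpbP).2 (hdb ▸ pb'.start_mem_support)
    obtain ⟨pa, hpaP, hpaA⟩ := hconn b hb a ha d hdA hadj.ne hdb
    have hbpa : b ∉ pa.support := fun hbp => (hpaA b hbp).2 rfl
    refine ⟨Walk.cons hadj Walk.nil, pa.concat h1.symm, ?_, isPath_concat hpaP h1.symm hbpa,
      ?_, ?_, ?_⟩
    · rw [Walk.cons_isPath_iff]
      exact ⟨by simp, by simp [hadj.ne]⟩
    · intro y hy
      rw [Walk.support_cons, Walk.support_nil, List.mem_cons, List.mem_singleton] at hy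
      rcases hy with rfl | rfl <;> assumption
    · intro y hy
      rw [mem_support_concat] at hy
      rcases hy with hy | rfl
      · exact (hpaA y hy).1
      · exact hb
    · intro y hy _
      rw [Walk.support_cons, Walk.support_nil, List.mem_cons, List.mem_singleton] at hy
      rcases hy with rfl | rfl
      · exact Or.inl rfl
      · exact Or.inr rfl

lemma combine_mem {a w b : W} {P Q : H.Walk a w} (hPP : P.IsPath) (hQP : Q.IsPath)
    (hPA : ∀ y ∈ P.support, y ∈ A) (hQA : ∀ y ∈ Q.support, y ∈ A)
    (hdisj : ∀ y, y ∈ P.support → y ∈ Q.support → y = a ∨ y = w)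
    (hwb : H.Adj w b) (hbP : b ∈ P.support) (hbQ : b ∉ Q.support)
    (hbw : b ≠ w) : TwoPaths H A a b := by
  have hwt := end_not_mem_takeUntil hPP hbP hbw
  refine ⟨P.takeUntil b hbP, Q.concat hwb, hPP.takeUntil hbP, isPath_concat hQP hwb hbQ,
    fun y hy => hPA y (P.support_takeUntil_subset hbP hy), ?_, ?_⟩
  · intro y hy
    rw [mem_support_concat] at hy
    rcases hy with hy | rfl
    · exact hQA y hy
    · exact hPA _ hbP
  · intro y hy1 hy2
    rw [mem_support_concat] at hy2
    rcases hy2 with hy2 | rfl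
    · rcases hdisj y (P.support_takeUntil_subset hbP hy1) hy2 with rfl | rfl
      · exact Or.inl rfl
      · exact absurd hy1 hwt
    · exact Or.inr rfl

lemma combine_seg {a w b x : W} {P Q : H.Walk a w} (hPP : P.IsPath) (hQP : Q.IsPath)
    (hPA : ∀ y ∈ P.support, y ∈ A) (hQA : ∀ y ∈ Q.support, y ∈ A)
    (hdisj : ∀ y, y ∈ P.support → y ∈ Q.support → y = a ∨ y = w)
    (hwb : H.Adj w b) (hbP : b ∉ P.support) (hbQ : b ∉ Q.support)
    {seg : H.Walk b x} (hsegP : seg.IsPath) (hsegA : ∀ y ∈ seg.support, y ∈ A)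
    (hxP : x ∈ P.support) (hxw : x ≠ w)
    (hsegfirst : ∀ y ∈ seg.support, (y ∈ P.support ∨ y ∈ Q.support) → y = x) :
    TwoPaths H A a b := by
  have hwt := end_not_mem_takeUntil hPP hxP hxw
  have hsegrev : ∀ y, y ∈ seg.reverse.support → y ∈ seg.support := by
    intro y hy; rwa [Walk.support_reverse, List.mem_reverse] at hy
  refine ⟨(P.takeUntil x hxP).append seg.reverse, Q.concat hwb, ?_,
    isPath_concat hQP hwb hbQ, ?_, ?_, ?_⟩
  · refine isPath_append_junction (hPP.takeUntil hxP) hsegP.reverse ?_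
    intro y hy1 hy2
    exact hsegfirst y (hsegrev y hy2) (Or.inl (P.support_takeUntil_subset hxP hy1))
  · intro y hy
    rw [Walk.mem_support_append_iff] at hy
    rcases hy with hy | hy
    · exact hPA y (P.support_takeUntil_subset hxP hy)
    · exact hsegA y (hsegrev y hy)
  · intro y hy
    rw [mem_support_concat] at hy
    rcases hy with hy | rfl
    · exact hQA y hy
    · exact hsegA _ seg.start_mem_support
  · intro y hy1 hy2
    rw [mem_support_concat] at hy2
    rcases hy2 with hy2 | rfl
    · rw [Walk.mem_support_append_iff] at hy1
      rcases hy1 with hy1 | hy1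
      · rcases hdisj y (P.support_takeUntil_subset hxP hy1) hy2 with rfl | rfl
        · exact Or.inl rfl
        · exact absurd hy1 hwt
      · have hyx := hsegfirst y (hsegrev y hy1) (Or.inr hy2)
        subst hyx
        rcases hdisj y hxP hy2 with rfl | rfl
        · exact Or.inl rfl
        · exact absurd rfl hxw
    · exact Or.inr rfl

lemma whitney_aux
    (hconn : ∀ x ∈ A, ∀ u ∈ A, ∀ w ∈ A, u ≠ x → w ≠ x →
      ∃ p : H.Walk u w, p.IsPath ∧ ∀ y ∈ p.support, y ∈ A ∧ y ≠ x)
    (hA3 : ∀ a b : W, ∃ c ∈ A, c ≠ a ∧ c ≠ b) :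
    ∀ n : ℕ, ∀ a b : W, a ∈ A → b ∈ A → a ≠ b →
      (∃ r : H.Walk a b, r.IsPath ∧ r.length ≤ n ∧ ∀ y ∈ r.support, y ∈ A) →
      TwoPaths H A a b := by
  intro n
  induction n using Nat.strong_induction_on with
  | _ n ihn =>
  rintro a b ha hb hab ⟨r, hrP, hrlen, hrA⟩
  obtain ⟨w, hwb, r', hr'P, hr'len, hbr', hsubr⟩ :=
    exists_penultimate r hrP (by
      rcases Nat.eq_zero_or_pos r.length with h0 | h1
      · exact absurd (Walk.eq_of_length_eq_zero h0) hab
      · exact h1)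
  by_cases hlen1 : r.length = 1
  · -- r' has length 0 so a = w, hence a adjacent to b
    have haw : a = w := Walk.eq_of_length_eq_zero (p := r') (by omega)
    exact whitney_base hconn ha hb (haw ▸ hwb) (hA3 a b)
  · have hrlen2 : 2 ≤ r.length := by
      rcases Nat.eq_zero_or_pos r.length with h0 | h1
      · exact absurd (Walk.eq_of_length_eq_zero h0) hab
      · omega
    have hwA : w ∈ A := hrA w (hsubr w (Walk.end_mem_support r'))
    have hwa : w ≠ a := by
      rintro rfl
      rw [Walk.isPath_iff_eq_nil] at hr'P
      subst hr'P
      simp at hr'len; omega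
    have hn1 : n - 1 < n := by omega
    obtain ⟨P, Q, hPP, hQP, hPA, hQA, hdisj⟩ :=
      ihn (n - 1) hn1 a w ha hwA (Ne.symm hwa)
        ⟨r', hr'P, by omega, fun y hy => hrA y (hsubr y hy)⟩
    have hbw : b ≠ w := hwb.ne'
    by_cases hbP : b ∈ P.support
    · have hbQ : b ∉ Q.support := by
        intro hbQ
        rcases hdisj b hbP hbQ with rfl | rfl
        · exact hab rfl
        · exact hbw rfl
      exact combine_mem hPP hQP hPA hQA hdisj hwb hbP hbQ hbw
    · by_cases hbQ : b ∈ Q.support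
      · have hdisj' : ∀ y, y ∈ Q.support → y ∈ P.support → y = a ∨ y = w :=
          fun y h1 h2 => hdisj y h2 h1
        exact combine_mem hQP hPP hQA hPA hdisj' hwb hbQ hbP hbw
      · obtain ⟨R, hRP, hRA⟩ := hconn w hwA a ha b hb (Ne.symm hwa) hbw
        obtain ⟨x, hxS, seg0, hseg0sub, hfirst⟩ :=
          exists_first_mem (S := {y | y ∈ P.support ∨ y ∈ Q.support}) R.reverse
            (Or.inl P.start_mem_support)
        have hseg0R : ∀ y ∈ seg0.support, y ∈ R.support := by
          intro y hy
          have := hseg0sub y hy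
          rwa [Walk.support_reverse, List.mem_reverse] at this
        set seg := seg0.bypass with hsegdef
        have hsegsub : ∀ y ∈ seg.support, y ∈ seg0.support :=
          fun y hy => seg0.support_bypass_subset hy
        have hsegA : ∀ y ∈ seg.support, y ∈ A :=
          fun y hy => (hRA y (hseg0R y (hsegsub y hy))).1
        have hxw : x ≠ w := (hRA x (hseg0R x (hsegsub x (Walk.end_mem_support seg)))).2
        have hsegfirst : ∀ y ∈ seg.support, (y ∈ P.support ∨ y ∈ Q.support) → y = x :=
          fun y hy hS => hfirst y (hsegsub y hy) hS
        rcases hxS with hxP | hxQ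
        · exact combine_seg hPP hQP hPA hQA hdisj hwb hbP hbQ seg0.bypass_isPath
            hsegA hxP hxw hsegfirst
        · have hdisj' : ∀ y, y ∈ Q.support → y ∈ P.support → y = a ∨ y = w :=
            fun y h1 h2 => hdisj y h2 h1
          exact combine_seg hQP hPP hQA hPA hdisj' hwb hbQ hbP seg0.bypass_isPath
            hsegA hxQ hxw (fun y hy hS => hsegfirst y hy hS.symm)

end Whitney
section Star
variable {V : Type*} {G : SimpleGraph V} {Nm M' : Set V}

lemma star_adj_some_none {u : ↥Nm} :
    (StarGraph G Nm M').Adj (some u) none ↔ ∃ m ∈ M', G.Adj (u : V) m := Iff.rfl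

lemma star_adj_some_some {u w : ↥Nm} :
    (StarGraph G Nm M').Adj (some u) (some w) ↔ (u : V) ≠ (w : V) ∧
      (G.Adj (u : V) (w : V) ∨
        ((∃ m ∈ M', G.Adj (u : V) m) ∧ ∃ m ∈ M', G.Adj (w : V) m)) := Iff.rfl

/-- Extract a real `G`-path from a star-graph path ending at the virtual monitor. -/
lemma star_to_real : ∀ (n : ℕ) (v : ↥Nm) (p : (StarGraph G Nm M').Walk (some v) none),
    p.IsPath → p.length ≤ n →
    ∃ (a : ↥Nm) (m1 : V), m1 ∈ M' ∧ G.Adj (a : V) m1 ∧ ∃ w : G.Walk (v : V) (a : V),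
      w.IsPath ∧ ∀ y ∈ w.support, ∃ hy : y ∈ Nm, some (⟨y, hy⟩ : ↥Nm) ∈ p.support := by
  intro n
  induction n with
  | zero =>
    intro v p _ hlen
    have : (some v : Option ↥Nm) = none := Walk.eq_of_length_eq_zero (Nat.le_zero.mp hlen)
    simp at this
  | succ n ih =>
    intro v p hp hlen
    by_cases hva : ∃ m ∈ M', G.Adj (v : V) m
    · refine ⟨v, ?_⟩
      obtain ⟨m, hm, hadj⟩ := hva
      refine ⟨m, hm, hadj, Walk.nil, by simp, ?_⟩
      intro y hy
      rw [Walk.support_nil, List.mem_singleton] at hy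
      subst hy
      exact ⟨v.2, by rw [Subtype.coe_eta]; exact p.start_mem_support⟩
    · cases p with
      | @cons _ z _ h p'' =>
        cases z with
        | none => exact absurd h hva
        | some u =>
          have h' : (v : V) ≠ (u : V) ∧ (G.Adj (v : V) (u : V) ∨
              ((∃ m ∈ M', G.Adj (v : V) m) ∧ ∃ m ∈ M', G.Adj (u : V) m)) := h
          have hreal : G.Adj (v : V) (u : V) := by
            rcases h'.2 with h2 | h2
            · exact h2
            · exact absurd h2.1 hva
          obtain ⟨a, m1, hm1, hadj, w', hw'P, hw'sub⟩ := ih u p'' hp.of_cons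
            (by rw [Walk.length_cons] at hlen; omega)
          refine ⟨a, m1, hm1, hadj, Walk.cons hreal w', ?_, ?_⟩
          · rw [Walk.cons_isPath_iff]
            refine ⟨hw'P, fun hmem => ?_⟩
            obtain ⟨hy, hsome⟩ := hw'sub _ hmem
            have : (some v : Option ↥Nm) ∈ p''.support := by
              have : (⟨(v : V), hy⟩ : ↥Nm) = v := Subtype.coe_eta _ _
              rwa [this] at hsome
            exact ((Walk.cons_isPath_iff _ _).mp hp).2 this
          · intro y hy
            rw [Walk.support_cons, List.mem_cons] at hy
            rcases hy with rfl | hy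
            · exact ⟨v.2, by rw [Subtype.coe_eta]; exact (Walk.cons h p'').start_mem_support⟩
            · obtain ⟨hy', hsome⟩ := hw'sub y hy
              exact ⟨hy', by rw [Walk.support_cons]; exact List.mem_cons_of_mem _ hsome⟩

end Star

section KConnPath
variable {W : Type*} {H : SimpleGraph W}

lemma kconn_path {k' : ℕ} (h : KConnected H k') {S : Set W} (hS : S.ncard < k')
    {u w : W} (hu : u ∉ S) (hw : w ∉ S) :
    ∃ p : H.Walk u w, p.IsPath ∧ ∀ y ∈ p.support, y ∉ S := by
  classical
  have hc := h.2 S hS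
  obtain ⟨q⟩ := hc.preconnected ⟨u, hu⟩ ⟨w, hw⟩
  obtain ⟨q', hq'⟩ := walk_of_induce q
  exact ⟨q'.bypass, q'.bypass_isPath, fun y hy => hq' y (q'.support_bypass_subset hy)⟩

end KConnPath

section Assembly
variable {V : Type*} {G : SimpleGraph V} {M : Set V}

lemma build_csp {D : Set V} {m1 m2 a b : V} (hm1 : m1 ∈ M) (hm2 : m2 ∈ M) (hne : m1 ≠ m2)
    (e1 : G.Adj m1 a) (e2 : G.Adj b m2) {core : G.Walk a b} (hcore : core.IsPath)
    (hsup : ∀ y ∈ core.support, y ∈ Mᶜ ∧ y ∉ D) {v : V} (hv : v ∈ core.support) :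
    ∃ p ∈ CSP G M, Traverses p v ∧ ∀ x ∈ D, x ∈ Mᶜ → ¬ Traverses p x := by
  have hm2c : m2 ∉ core.support := fun h => (hsup _ h).1 hm2
  have hpath : (core.concat e2).IsPath := isPath_concat hcore e2 hm2c
  have hm1c : m1 ∉ (core.concat e2).support := by
    rw [mem_support_concat]
    rintro (h | rfl)
    · exact (hsup _ h).1 hm1
    · exact hne rfl
  refine ⟨⟨m1, m2, Walk.cons e1 (core.concat e2)⟩, ⟨hm1, hm2, hne, hpath.cons hm1c⟩, ?_, ?_⟩
  · show v ∈ (Walk.cons e1 (core.concat e2)).support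
    rw [Walk.support_cons, List.mem_cons, mem_support_concat]
    exact Or.inr (Or.inl hv)
  · intro x hx hxM hT
    have hT' : x ∈ (Walk.cons e1 (core.concat e2)).support := hT
    rw [Walk.support_cons, List.mem_cons, mem_support_concat] at hT'
    rcases hT' with rfl | hT' | rfl
    · exact hxM hm1
    · exact (hsup _ hT').2 hx
    · exact hxM hm2

lemma assemble {D : Set V} {v a' b' c x m m2 : V} (hm : m ∈ M) (hm2 : m2 ∈ M)
    (hmne : m ≠ m2) (ea : G.Adj a' m) (ec : G.Adj c m2)
    {w1 : G.Walk v a'} {w2 : G.Walk v b'} (hw1P : w1.IsPath) (hw2P : w2.IsPath)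
    (hw1A : ∀ y ∈ w1.support, y ∈ Mᶜ ∧ y ∉ D) (hw2A : ∀ y ∈ w2.support, y ∈ Mᶜ ∧ y ∉ D)
    (hdisj : ∀ y, y ∈ w1.support → y ∈ w2.support → y = v)
    {seg : G.Walk c x} (hsegP : seg.IsPath) (hsegA : ∀ y ∈ seg.support, y ∈ Mᶜ ∧ y ∉ D)
    (hx2 : x ∈ w2.support)
    (hsegfirst : ∀ y ∈ seg.support, (y ∈ w1.support ∨ y ∈ w2.support) → y = x) :
    ∃ p ∈ CSP G M, Traverses p v ∧ ∀ z ∈ D, z ∈ Mᶜ → ¬ Traverses p z := by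
  classical
  set W1 : G.Walk a' x := w1.reverse.append (w2.takeUntil x hx2) with hW1def
  have hW1P : W1.IsPath := by
    refine isPath_append_junction hw1P.reverse (hw2P.takeUntil hx2) ?_
    intro y hy1 hy2
    rw [Walk.support_reverse, List.mem_reverse] at hy1
    exact hdisj y hy1 (w2.support_takeUntil_subset hx2 hy2)
  have hW1sub : ∀ y ∈ W1.support, y ∈ w1.support ∨ y ∈ w2.support := by
    intro y hy
    rw [hW1def, Walk.mem_support_append_iff] at hy
    rcases hy with hy | hy
    · rw [Walk.support_reverse, List.mem_reverse] at hy
      exact Or.inl hy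
    · exact Or.inr (w2.support_takeUntil_subset hx2 hy)
  have hsegrev : ∀ y, y ∈ seg.reverse.support → y ∈ seg.support := by
    intro y hy; rwa [Walk.support_reverse, List.mem_reverse] at hy
  have hcoreP : (W1.append seg.reverse).IsPath := by
    refine isPath_append_junction hW1P hsegP.reverse ?_
    intro y hy1 hy2
    exact hsegfirst y (hsegrev y hy2) (hW1sub y hy1)
  have hvW1 : v ∈ W1.support := by
    rw [hW1def, Walk.mem_support_append_iff]
    exact Or.inl (by rw [Walk.support_reverse, List.mem_reverse]; exact w1.start_mem_support)
  have hvcore : v ∈ (W1.append seg.reverse).support := by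
    rw [Walk.mem_support_append_iff]; exact Or.inl hvW1
  have hcoreA : ∀ y ∈ (W1.append seg.reverse).support, y ∈ Mᶜ ∧ y ∉ D := by
    intro y hy
    rw [Walk.mem_support_append_iff] at hy
    rcases hy with hy | hy
    · rcases hW1sub y hy with h | h
      · exact hw1A y h
      · exact hw2A y h
    · exact hsegA y (hsegrev y hy)
  exact build_csp hm hm2 hmne ea.symm ec hcoreP hcoreA hvcore

end Assembly

section Key
variable {V : Type*} [Fintype V] {G : SimpleGraph V} {M : Set V}

lemma key (hM : M.Nonempty) {k : ℕ} (hk : k + 2 ≤ Mᶜ.ncard)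
    (h1 : KConnected (StarGraph G Mᶜ M) (k + 2))
    (h2 : ∀ m ∈ M, KConnected (StarGraph G Mᶜ (M \ {m})) (k + 1))
    {D : Set V} (hDM : D ⊆ Mᶜ) (hDk : D.ncard ≤ k) {v : V} (hv : v ∈ Mᶜ) (hvD : v ∉ D) :
    ∃ p ∈ CSP G M, Traverses p v ∧ ∀ x ∈ D, x ∈ Mᶜ → ¬ Traverses p x := by
  classical
  set vv : ↥(Mᶜ) := ⟨v, hv⟩ with hvvdef
  set D' : Set (Option ↥(Mᶜ)) := {z | ∃ u : ↥(Mᶜ), z = some u ∧ (u : V) ∈ D} with hD'def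
  obtain ⟨v0, hv0⟩ := hM
  have hD'card : D'.ncard ≤ D.ncard := by
    apply Set.ncard_le_ncard_of_injOn (fun z => Option.elim z v0 Subtype.val)
    · rintro z ⟨u, rfl, hu⟩; exact hu
    · rintro z1 ⟨u1, rfl, -⟩ z2 ⟨u2, rfl, -⟩ hf
      simp only [Option.elim_some] at hf
      exact congrArg some (Subtype.ext hf)
  have hmemD' : ∀ (u : ↥(Mᶜ)), (some u ∈ D') ↔ (u : V) ∈ D := by
    intro u
    constructor
    · rintro ⟨u', he, hu'⟩
      cases Option.some.inj he
      exact hu'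
    · intro h; exact ⟨u, rfl, h⟩
  have hnone : (none : Option ↥(Mᶜ)) ∉ D' := by rintro ⟨u, he, -⟩; cases he
  have hsv : (some vv : Option ↥(Mᶜ)) ∉ D' := fun h => hvD ((hmemD' vv).mp h)
  have hC : ∃ (a b : ↥(Mᶜ)) (m1 m2 : V), m1 ∈ M ∧ m2 ∈ M ∧
      G.Adj (a : V) m1 ∧ G.Adj (b : V) m2 ∧
      ∃ (w1 : G.Walk v (a : V)) (w2 : G.Walk v (b : V)), w1.IsPath ∧ w2.IsPath ∧
        (∀ y ∈ w1.support, y ∈ Mᶜ ∧ y ∉ D) ∧ (∀ y ∈ w2.support, y ∈ Mᶜ ∧ y ∉ D) ∧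
        (∀ y, y ∈ w1.support → y ∈ w2.support → y = v) := by
    by_cases hva : ∃ m ∈ M, G.Adj v m
    · obtain ⟨m, hm, hadj⟩ := hva
      refine ⟨vv, vv, m, m, hm, hm, hadj, hadj, Walk.nil, Walk.nil, by simp, by simp, ?_, ?_, ?_⟩
      · intro y hy
        rw [Walk.support_nil, List.mem_singleton] at hy
        subst hy; exact ⟨hv, hvD⟩
      · intro y hy
        rw [Walk.support_nil, List.mem_singleton] at hy
        subst hy; exact ⟨hv, hvD⟩
      · intro y hy _
        rw [Walk.support_nil, List.mem_singleton] at hy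
        exact hy
    · have hconn : ∀ x ∈ D'ᶜ, ∀ u ∈ D'ᶜ, ∀ w ∈ D'ᶜ, u ≠ x → w ≠ x →
          ∃ p : (StarGraph G Mᶜ M).Walk u w, p.IsPath ∧ ∀ y ∈ p.support, y ∈ D'ᶜ ∧ y ≠ x := by
        intro x _ u hu w hw hux hwx
        have hS : (D' ∪ {x}).ncard < k + 2 := by
          have h1' := Set.ncard_union_le D' ({x} : Set (Option ↥(Mᶜ)))
          have h2' := Set.ncard_singleton x
          omega
        obtain ⟨p, hpP, hpS⟩ := kconn_path h1 hS
          (by intro hmem; rcases hmem with hmem | hmem; exacts [hu hmem, hux hmem])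
          (by intro hmem; rcases hmem with hmem | hmem; exacts [hw hmem, hwx hmem])
        refine ⟨p, hpP, fun y hy => ⟨?_, ?_⟩⟩
        · exact fun hyD => hpS y hy (Or.inl hyD)
        · exact fun hyx => hpS y hy (Or.inr (by rw [hyx]; rfl))
      have hcardO : Nat.card (Option ↥(Mᶜ)) = Mᶜ.ncard + 1 := by
        rw [Nat.card_eq_fintype_card, Fintype.card_option, ← Nat.card_coe_set_eq,
          Nat.card_eq_fintype_card]
      have hA3 : ∀ a b : Option ↥(Mᶜ), ∃ c ∈ D'ᶜ, c ≠ a ∧ c ≠ b := by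
        intro a b
        by_contra hcon
        push_neg at hcon
        have hsub : D'ᶜ ⊆ {a, b} := by
          intro c hc
          rcases eq_or_ne c a with rfl | hca
          · exact Set.mem_insert _ _
          · rw [hcon c hc hca]; exact Set.mem_insert_of_mem _ rfl
        have hle2 : (D'ᶜ).ncard ≤ 2 := by
          refine le_trans (Set.ncard_le_ncard hsub (Set.toFinite _)) ?_
          have := Set.ncard_insert_le a ({b} : Set (Option ↥(Mᶜ)))
          have := Set.ncard_singleton b
          omega
        have hcompl : D'.ncard + (D'ᶜ).ncard = Nat.card (Option ↥(Mᶜ)) :=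
          Set.ncard_add_ncard_compl D'
        omega
      obtain ⟨x0, hx0, hx0a, hx0b⟩ := hA3 (some vv) none
      obtain ⟨r, hrP, hrA⟩ := hconn x0 hx0 (some vv) hsv none hnone
        (Ne.symm hx0a) (Ne.symm hx0b)
      obtain ⟨P, Q, hPP, hQP, hPA, hQA, hdisj⟩ := whitney_aux hconn hA3 r.length
        (some vv) none hsv hnone (by simp)
        ⟨r, hrP, le_rfl, fun y hy => (hrA y hy).1⟩
      obtain ⟨a, m1, hm1, hadja, w1, hw1P, hw1sub⟩ := star_to_real P.length vv P hPP le_rfl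
      obtain ⟨b, m2, hm2, hadjb, w2, hw2P, hw2sub⟩ := star_to_real Q.length vv Q hQP le_rfl
      refine ⟨a, b, m1, m2, hm1, hm2, hadja, hadjb, w1, w2, hw1P, hw2P, ?_, ?_, ?_⟩
      · intro y hy
        obtain ⟨hy', hs⟩ := hw1sub y hy
        exact ⟨hy', fun hyD => (hPA _ hs) ((hmemD' _).mpr hyD)⟩
      · intro y hy
        obtain ⟨hy', hs⟩ := hw2sub y hy
        exact ⟨hy', fun hyD => (hQA _ hs) ((hmemD' _).mpr hyD)⟩
      · intro y hy1 hy2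
        obtain ⟨ha1, hs1⟩ := hw1sub y hy1
        obtain ⟨ha2, hs2⟩ := hw2sub y hy2
        have hs2' : (some ⟨y, ha1⟩ : Option ↥(Mᶜ)) ∈ Q.support := by
          have : (⟨y, ha1⟩ : ↥(Mᶜ)) = ⟨y, ha2⟩ := Subtype.ext rfl
          rw [this]; exact hs2
        rcases hdisj _ hs1 hs2' with he | he
        · have : (⟨y, ha1⟩ : ↥(Mᶜ)) = vv := Option.some.inj he
          exact congrArg Subtype.val this
        · cases he
  obtain ⟨a, b, m1, m2, hm1, hm2, hadja, hadjb, w1, w2, hw1P, hw2P, hw1A, hw2A, hdisj⟩ := hC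
  rcases eq_or_ne m1 m2 with rfl | hne
  · -- both sides attach to the same monitor m1; use G_{m1}
    have hkc := h2 m1 hm1
    have hScard : D'.ncard < k + 1 := by omega
    obtain ⟨p2, hp2P, hp2S⟩ := kconn_path hkc hScard hsv hnone
    obtain ⟨c, m2', hm2', hadjc, Q, hQP', hQsub⟩ := star_to_real p2.length vv p2 hp2P le_rfl
    have hm2M : m2' ∈ M := hm2'.1
    have hm2ne : m1 ≠ m2' := fun h => hm2'.2 (by rw [h]; rfl)
    have hQA : ∀ y ∈ Q.support, y ∈ Mᶜ ∧ y ∉ D := by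
      intro y hy
      obtain ⟨hy', hs⟩ := hQsub y hy
      exact ⟨hy', fun hD => (hp2S _ hs) ((hmemD' _).mpr hD)⟩
    obtain ⟨x, hxS, seg0, hseg0sub, hfirst⟩ :=
      exists_first_mem (S := {y | y ∈ w1.support ∨ y ∈ w2.support}) Q.reverse
        (Or.inl w1.start_mem_support)
    have hsegsub : ∀ y ∈ seg0.bypass.support, y ∈ Q.support := by
      intro y hy
      have := hseg0sub y (seg0.support_bypass_subset hy)
      rwa [Walk.support_reverse, List.mem_reverse] at this
    have hsegA : ∀ y ∈ seg0.bypass.support, y ∈ Mᶜ ∧ y ∉ D :=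
      fun y hy => hQA y (hsegsub y hy)
    have hsegfirst : ∀ y ∈ seg0.bypass.support,
        (y ∈ w1.support ∨ y ∈ w2.support) → y = x :=
      fun y hy hS => hfirst y (seg0.support_bypass_subset hy) hS
    rcases hxS with hx1 | hx2
    · exact assemble hm1 hm2M hm2ne hadjb hadjc hw2P hw1P hw2A hw1A
        (fun y hy1 hy2 => hdisj y hy2 hy1) seg0.bypass_isPath hsegA hx1
        (fun y hy hS => hsegfirst y hy hS.symm)
    · exact assemble hm1 hm2M hm2ne hadja hadjc hw1P hw2P hw1A hw2A hdisj
        seg0.bypass_isPath hsegA hx2 hsegfirst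
  · -- distinct monitors: direct concatenation
    have hcoreP : (w1.reverse.append w2).IsPath := by
      refine isPath_append_junction hw1P.reverse hw2P ?_
      intro y hy1 hy2
      rw [Walk.support_reverse, List.mem_reverse] at hy1
      exact hdisj y hy1 hy2
    have hcoreA : ∀ y ∈ (w1.reverse.append w2).support, y ∈ Mᶜ ∧ y ∉ D := by
      intro y hy
      rw [Walk.mem_support_append_iff] at hy
      rcases hy with hy | hy
      · rw [Walk.support_reverse, List.mem_reverse] at hy
        exact hw1A y hy
      · exact hw2A y hy
    have hvcore : v ∈ (w1.reverse.append w2).support := by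
      rw [Walk.mem_support_append_iff]
      exact Or.inl (by rw [Walk.support_reverse, List.mem_reverse]; exact w1.start_mem_support)
    exact build_csp hm1 hm2 hne hadja.symm hadjb hcoreP hcoreA hvcore

end Key

end StmtAux

/-- If `k ≤ σ − 2`, the auxiliary graph `G*` is `(k+2)`-vertex-connected, and
`G_m` is `(k+1)`-vertex-connected for every monitor `m`, then `G` is
`k`-identifiable under CSP. -/
theorem stmt_16 {V : Type*} [Fintype V] (G : SimpleGraph V) (hG : G.Connected)
    (M : Set V) (hM : M.Nonempty) (k : ℕ) (hk : k + 2 ≤ Mᶜ.ncard)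
    (h1 : KConnected (StarGraph G Mᶜ M) (k + 2))
    (h2 : ∀ m ∈ M, KConnected (StarGraph G Mᶜ (M \ {m})) (k + 1)) :
    Identifiable (CSP G M) Mᶜ k := by
  intro F F' hF hF' hFk hF'k hne
  have hor : ¬ (F ⊆ F') ∨ ¬ (F' ⊆ F) := by
    by_contra h
    push_neg at h
    exact hne (subset_antisymm h.1 h.2)
  rcases hor with h | h
  · obtain ⟨v, hvF, hvF'⟩ := Set.not_subset.mp h
    obtain ⟨p, hp, hT, havoid⟩ := StmtAux.key hM hk h1 h2 hF' hF'k (hF hvF) hvF'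
    exact Or.inl ⟨p, hp, ⟨v, hvF, hT⟩, fun x hx => havoid x hx (hF' hx)⟩
  · obtain ⟨v, hvF', hvF⟩ := Set.not_subset.mp h
    obtain ⟨p, hp, hT, havoid⟩ := StmtAux.key hM hk h1 h2 hF hFk (hF' hvF') hvF
    exact Or.inr ⟨p, hp, ⟨v, hvF', hT⟩, fun x hx => havoid x hx (hF hx)⟩
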